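/- Let V be a finite-dimensional vector space over the field with two elements, equipped with a nondegenerate alternating bilinear form ⟨,⟩. For any symmetric bilinear form β on V that is even (β(x,x)=0 for all x), there exists a linear endomorphism F of V such that β(a,b) = ⟨a, F b⟩ + ⟨F a, b⟩ for all a, b. -/

import Mathlib

/-- For a finite-dimensional `𝔽₂`-vector space with nondegenerate alternating form `B`,
every even symmetric bilinear form `β` can be written as `β a b = B a (F b) + B (F a) b`. -/
theorem stmt_0 (V : Type*) [AddCommGroup V] [Module (ZMod 2) V]
    [FiniteDimensional (ZMod 2) V]
    (B : V →ₗ[ZMod 2] V →ₗ[ZMod 2] ZMod 2)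
    (hB_nd : ∀ x : V, (∀ y : V, B x y = 0) → x = 0)
    (hB_alt : ∀ x : V, B x x = 0)
    (β : V →ₗ[ZMod 2] V →ₗ[ZMod 2] ZMod 2)
    (hβ_sym : ∀ a b : V, β a b = β b a)
    (hβ_even : ∀ x : V, β x x = 0) :
    ∃ F : V →ₗ[ZMod 2] V, ∀ a b : V, β a b = B a (F b) + B (F a) b := by
  have hBsym : ∀ x y : V, B x y = B y x := by
    intro x y
    have h := hB_alt (x + y)
    simp only [map_add, LinearMap.add_apply, hB_alt x, hB_alt y] at h
    have h2 : B x y = -(B y x) := by linear_combination h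
    simpa [CharTwo.neg_eq] using h2
  let b := Module.finBasis (ZMod 2) V
  let M : Matrix (Fin (Module.finrank (ZMod 2) V)) (Fin (Module.finrank (ZMod 2) V)) (ZMod 2) :=
    fun i j => if i < j then β (b i) (b j) else 0
  let C : V →ₗ[ZMod 2] V →ₗ[ZMod 2] ZMod 2 := Matrix.toLinearMap₂ b b M
  have hC : ∀ x y : V, C x y + C y x = β x y := by
    have key : (C + C.flip) = β := by
      apply LinearMap.ext_basis b b
      intro i j
      have h1 : ∀ i j, C (b i) (b j) = M i j := by
        intro i j
        simp [C, Matrix.toLinearMap₂_apply, b.repr_self, Finsupp.single_apply]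
      simp only [LinearMap.add_apply, LinearMap.flip_apply, h1]
      rcases lt_trichotomy i j with h | h | h
      · simp [M, h, not_lt.mpr h.le]
      · subst h; simp [M, hβ_even]
      · simp [M, h, not_lt.mpr h.le, hβ_sym (b j) (b i)]
    intro x y
    calc C x y + C y x = (C + C.flip) x y := by simp
    _ = β x y := by rw [key]
  let e : V ≃ₗ[ZMod 2] Module.Dual (ZMod 2) V := LinearMap.BilinForm.toDual B (⟨hB_nd, fun y hy => hB_nd y (fun x => by rw [hBsym]; exact hy x)⟩ : LinearMap.BilinForm.Nondegenerate B)
  refine ⟨e.symm.toLinearMap ∘ₗ C.flip, fun a bb => ?_⟩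
  have hFa : ∀ x y : V, B (e.symm (C.flip x)) y = C y x := by
    intro x y
    have h := LinearMap.BilinForm.apply_toDual_symm_apply (hB := (⟨hB_nd, fun y hy => hB_nd y (fun x => by rw [hBsym]; exact hy x)⟩ : LinearMap.BilinForm.Nondegenerate B)) (f := C.flip x) (v := y)
    exact h
  simp only [LinearMap.comp_apply, LinearMap.coe_comp, LinearEquiv.coe_coe, Function.comp_apply]
  rw [hBsym a, hFa, hFa]
  rw [← hC a bb, add_comm]
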